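/- Let A ⊂ B(X) be a strongly closed unital algebra with complemented invariant subspace lattice and let q ∈ B(X) be a projection commuting with every element of A. Then the strong-operator closure of qAq in B(qX) is an algebra such that every closed invariant subspace of it in qX has a closed invariant complement in qX. -/

import Mathlib

open Filter Topology

/-- If `A` is a strongly closed unital algebra with complemented invariant
subspace lattice and `q ∈ A'` is a projection, then the strong-operator closure of `qAq`
(as operators on `qX`) has complemented invariant subspace lattice: every closed subspace
`L ⊆ qX` invariant under every member of the SOT closure of `qAq` admits a closed invariant
complement inside `qX`. -/
theorem stmt3 {X : Type*} [NormedAddCommGroup X] [NormedSpace ℂ X] [CompleteSpace X]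
    (A : Subalgebra ℂ (X →L[ℂ] X))
    (hA : IsClosed ((fun a : X →L[ℂ] X => (a : X → X)) '' (A : Set (X →L[ℂ] X))))
    (hCISL : ∀ K : Submodule ℂ X, IsClosed (K : Set X) → (∀ a ∈ A, ∀ x ∈ K, a x ∈ K) →
      ∃ Kc : Submodule ℂ X, IsClosed (Kc : Set X) ∧ (∀ a ∈ A, ∀ x ∈ Kc, a x ∈ Kc) ∧
        IsCompl K Kc)
    (q : X →L[ℂ] X) (hq : q * q = q) (hq' : ∀ a ∈ A, q * a = a * q)
    -- the SOT closure of `qAq`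
    (S : Set (X →L[ℂ] X))
    (hS : S = {t : X →L[ℂ] X |
      (t : X → X) ∈ closure ((fun a : X →L[ℂ] X => (a : X → X)) ''
        ((fun a : X →L[ℂ] X => q * a * q) '' (A : Set (X →L[ℂ] X))))})
    (L : Submodule ℂ X) (hLcl : IsClosed (L : Set X)) (hLq : L ≤ LinearMap.range (q : X →ₗ[ℂ] X))
    (hLinv : ∀ t ∈ S, ∀ x ∈ L, t x ∈ L) :
    ∃ Lc : Submodule ℂ X, IsClosed (Lc : Set X) ∧ Lc ≤ LinearMap.range (q : X →ₗ[ℂ] X) ∧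
      (∀ t ∈ S, ∀ x ∈ Lc, t x ∈ Lc) ∧
      L ⊓ Lc = ⊥ ∧ L ⊔ Lc = LinearMap.range (q : X →ₗ[ℂ] X) := by
  -- basic facts about the projection q
  have hqq : ∀ y : X, q (q y) = q y := by
    intro y
    have := ContinuousLinearMap.ext_iff.mp hq y
    simpa [ContinuousLinearMap.mul_apply] using this
  have hmemrq : ∀ x : X, x ∈ LinearMap.range (q : X →ₗ[ℂ] X) ↔ q x = x := by
    intro x
    constructor
    · rintro ⟨y, rfl⟩; exact hqq y
    · intro h; exact ⟨x, h⟩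
  have hrqcl : IsClosed ((LinearMap.range (q : X →ₗ[ℂ] X) : Submodule ℂ X) : Set X) := by
    have hset : ((LinearMap.range (q : X →ₗ[ℂ] X) : Submodule ℂ X) : Set X)
        = (fun x : X => q x - x) ⁻¹' {0} := by
      ext x
      simp only [SetLike.mem_coe, hmemrq, Set.mem_preimage, Set.mem_singleton_iff,
        sub_eq_zero]
    rw [hset]
    exact IsClosed.preimage (q.continuous.sub continuous_id) isClosed_singleton
  -- key lemma: elements of S map a point into any closed set that all qaq map it into
  have key : ∀ t ∈ S, ∀ x : X, ∀ C : Set X, IsClosed C →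
      (∀ a ∈ A, (q * a * q) x ∈ C) → t x ∈ C := by
    intro t ht x C hC hmem
    rw [hS] at ht
    have h1 : t x ∈ closure ((fun g : X → X => g x) ''
        ((fun a : X →L[ℂ] X => (a : X → X)) ''
          ((fun a : X →L[ℂ] X => q * a * q) '' (A : Set (X →L[ℂ] X))))) :=
      image_closure_subset_closure_image (continuous_apply x) ⟨(t : X → X), ht, rfl⟩
    refine closure_minimal ?_ hC h1
    rintro _ ⟨g, ⟨b, ⟨a, haA, rfl⟩, rfl⟩, rfl⟩
    exact hmem a haA
  -- qaq ∈ S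
  have hqaqS : ∀ a ∈ A, (q * a * q) ∈ S := by
    intro a ha
    rw [hS]
    exact subset_closure ⟨q * a * q, ⟨a, ha, rfl⟩, rfl⟩
  -- L is invariant under A
  have hLA : ∀ a ∈ A, ∀ x ∈ L, a x ∈ L := by
    intro a ha x hx
    have hqx : q x = x := (hmemrq x).mp (hLq hx)
    have h1 : (q * a * q) x ∈ L := hLinv _ (hqaqS a ha) x hx
    have h2 : (q * a * q) x = a x := by
      simp only [ContinuousLinearMap.mul_apply, hqx]
      have := ContinuousLinearMap.ext_iff.mp (hq' a ha) x
      simp only [ContinuousLinearMap.mul_apply, hqx] at this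
      exact this
    rwa [h2] at h1
  obtain ⟨Kc, hKcl, hKA, hKcompl⟩ := hCISL L hLcl hLA
  refine ⟨Kc ⊓ LinearMap.range (q : X →ₗ[ℂ] X), ?_, inf_le_right, ?_, ?_, ?_⟩
  · exact hKcl.inter hrqcl
  · -- invariance of Kc ⊓ range q under S
    intro t ht x hx
    obtain ⟨hxK, hxq⟩ := Submodule.mem_inf.mp hx
    have hqx : q x = x := (hmemrq x).mp hxq
    have hqaq : ∀ a ∈ A, (q * a * q) x = a x := by
      intro a ha
      simp only [ContinuousLinearMap.mul_apply, hqx]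
      have := ContinuousLinearMap.ext_iff.mp (hq' a ha) x
      simp only [ContinuousLinearMap.mul_apply, hqx] at this
      exact this
    refine Submodule.mem_inf.mpr ⟨?_, ?_⟩
    · refine key t ht x (Kc : Set X) hKcl ?_
      intro a ha
      rw [hqaq a ha]
      exact hKA a ha x hxK
    · refine key t ht x ((LinearMap.range (q : X →ₗ[ℂ] X) : Submodule ℂ X) : Set X) hrqcl ?_
      intro a ha
      exact ⟨(a * q) x, by simp [ContinuousLinearMap.mul_apply]⟩
  · -- trivial intersection
    have := hKcompl.disjoint
    rw [disjoint_iff] at this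
    rw [← le_bot_iff, ← this]
    exact le_inf inf_le_left (le_trans inf_le_right inf_le_left)
  · -- span
    apply le_antisymm
    · exact sup_le hLq inf_le_right
    · intro x hx
      have hqx : q x = x := (hmemrq x).mp hx
      have htop : x ∈ L ⊔ Kc := by
        rw [hKcompl.codisjoint.eq_top]; trivial
      obtain ⟨l, hl, k, hk, hlk⟩ := Submodule.mem_sup.mp htop
      have hkrq : k ∈ LinearMap.range (q : X →ₗ[ℂ] X) := by
        have : k = x - l := by rw [← hlk]; abel
        rw [this]
        exact Submodule.sub_mem _ ((hmemrq x).mpr hqx) (hLq hl)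
      exact Submodule.mem_sup.mpr ⟨l, hl, k, Submodule.mem_inf.mpr ⟨hk, hkrq⟩, hlk⟩
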